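/- Fix n ≥ 2 and p ∈ (0,1). Let G⃗(n,p) be the random digraph on [n] in which each ordered pair (i,j) with i ≠ j is an edge independently with probability p, and let Y be the number of Hamiltonian paths of G⃗(n,p), i.e. the number of permutations π ∈ 𝔖_n such that (π_i, π_{i+1}) is an edge for every i ∈ [n-1]. Then ℙ(Y ≥ ½ · n! · p^{n−1}) ≥ ¼ · exp(1 − 1/p). -/

import Mathlib

open MeasureTheory

/-- Directed edges on vertex set `Fin n`: ordered pairs of distinct vertices. -/
abbrev DEdge (n : ℕ) := {e : Fin n × Fin n // e.1 ≠ e.2}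

/-- The `i`-th consecutive directed edge `(π_i, π_{i+1})` (for `1 ≤ i ≤ n-1`) traced out by a
permutation `π` of `Fin n` in one-line notation. -/
def pathEdge (n : ℕ) (π : Equiv.Perm (Fin n)) (i : Fin (n - 1)) : DEdge n :=
  ⟨(π ⟨i.1, by have := i.isLt; omega⟩, π ⟨i.1 + 1, by have := i.isLt; omega⟩), by
    intro h
    have h3 : i.1 = i.1 + 1 := congrArg Fin.val (π.injective h)
    omega⟩

/-- The random digraph `G⃗(n,p)`: the product Bernoulli(`p`) measure on assignments of
presence/absence to each of the `n(n−1)` possible directed edges on `[n]`. -/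
noncomputable def digraphMeasure (n : ℕ) (p : ENNReal) (hp : p ≤ 1) :
    Measure (DEdge n → Bool) :=
  Measure.pi (fun _ => (PMF.bernoulli p.toNNReal (by simpa using ENNReal.toNNReal_mono ENNReal.one_ne_top hp)).toMeasure)

/-- `hamY n ω` is the number of Hamiltonian paths of the digraph `ω`: permutations
`π ∈ 𝔖_n` all of whose consecutive pairs `(π_i, π_{i+1})`, `1 ≤ i ≤ n−1`, are edges. -/
noncomputable def hamY (n : ℕ) (ω : DEdge n → Bool) : ℕ :=
  (Finset.univ.filter (fun π : Equiv.Perm (Fin n) =>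
    ∀ i : Fin (n - 1), ω (pathEdge n π i) = true)).card

set_option maxHeartbeats 1000000

noncomputable def edgesOf (n : ℕ) (π : Equiv.Perm (Fin n)) : Finset (DEdge n) :=
  Finset.image (pathEdge n π) Finset.univ

lemma pathEdge_injective (n : ℕ) (π : Equiv.Perm (Fin n)) :
    Function.Injective (pathEdge n π) := by
  intro i j h
  have h1 : π ⟨i.1, by have := i.isLt; omega⟩ = π ⟨j.1, by have := j.isLt; omega⟩ :=
    congrArg (fun e => e.1.1) h
  have h2 := congrArg Fin.val (π.injective h1)
  exact Fin.ext h2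

lemma card_edgesOf (n : ℕ) (π : Equiv.Perm (Fin n)) : (edgesOf n π).card = n - 1 := by
  rw [edgesOf, Finset.card_image_of_injective _ (pathEdge_injective n π), Finset.card_univ,
    Fintype.card_fin]

lemma mem_edgesOf {n : ℕ} {π : Equiv.Perm (Fin n)} {e : DEdge n} :
    e ∈ edgesOf n π ↔ (π.symm e.1.2).val = (π.symm e.1.1).val + 1 := by
  constructor
  · rintro he
    obtain ⟨i, -, rfl⟩ := Finset.mem_image.mp he
    simp only [pathEdge, Equiv.symm_apply_apply]
  · intro h
    have hlt : (π.symm e.1.1).val < n - 1 := by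
      have := (π.symm e.1.2).isLt; omega
    refine Finset.mem_image.mpr ⟨⟨(π.symm e.1.1).val, hlt⟩, Finset.mem_univ _, ?_⟩
    apply Subtype.ext
    have h1 : (⟨(π.symm e.1.1).val, by omega⟩ : Fin n) = π.symm e.1.1 := rfl
    have h2 : (⟨(π.symm e.1.1).val + 1, by have := (π.symm e.1.1).isLt; omega⟩ : Fin n)
        = π.symm e.1.2 := Fin.ext h.symm
    show (π ⟨(π.symm e.1.1).val, _⟩, π ⟨(π.symm e.1.1).val + 1, _⟩) = e.1
    rw [h1, h2, Equiv.apply_symm_apply, Equiv.apply_symm_apply]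

section Count

variable {n : ℕ}

/-- rank of `x` among `H` w.r.t. position under `π` -/
noncomputable def rkOf (H : Finset (Fin n)) (π : Equiv.Perm (Fin n)) (x : Fin n) : ℕ :=
  (H.filter (fun y => π.symm y < π.symm x)).card

lemma rkOf_lt_rkOf {H : Finset (Fin n)} {π : Equiv.Perm (Fin n)} {x x' : Fin n}
    (hx : x ∈ H) (h : π.symm x < π.symm x') : rkOf H π x < rkOf H π x' := by
  apply Finset.card_lt_card
  rw [Finset.ssubset_iff_of_subset]
  · exact ⟨x, Finset.mem_filter.mpr ⟨hx, h⟩, fun hc => lt_irrefl _ (Finset.mem_filter.mp hc).2⟩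
  · intro y hy
    rcases Finset.mem_filter.mp hy with ⟨h1, h2⟩
    exact Finset.mem_filter.mpr ⟨h1, h2.trans h⟩


lemma rkOf_lt_card {H : Finset (Fin n)} {π : Equiv.Perm (Fin n)} {x : Fin n}
    (hx : x ∈ H) : rkOf H π x < H.card := by
  apply Finset.card_lt_card
  rw [Finset.ssubset_iff_of_subset (Finset.filter_subset _ _)]
  exact ⟨x, hx, fun hc => lt_irrefl _ (Finset.mem_filter.mp hc).2⟩

lemma rkOf_injOn {H : Finset (Fin n)} {π : Equiv.Perm (Fin n)} {x x' : Fin n}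
    (hx : x ∈ H) (hx' : x' ∈ H) (h : rkOf H π x = rkOf H π x') : x = x' := by
  rcases lt_trichotomy (π.symm x) (π.symm x') with hlt | heq | hgt
  · exact absurd h (rkOf_lt_rkOf hx hlt).ne
  · exact π.symm.injective heq
  · exact absurd h.symm (rkOf_lt_rkOf hx' hgt).ne


lemma count_superperms (T : Finset (DEdge n)) (π₀ : Equiv.Perm (Fin n))
    (hπ₀ : T ⊆ edgesOf n π₀) :
    (Finset.univ.filter (fun π : Equiv.Perm (Fin n) => T ⊆ edgesOf n π)).card
      ≤ (n - T.card).factorial := by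
  classical
  set B : Finset (Fin n) := T.image (fun e => e.1.2) with hBdef
  have hsnd : Set.InjOn (fun e : DEdge n => e.1.2) T := by
    intro e he e' he' h
    simp only at h
    have h1 := mem_edgesOf.mp (hπ₀ he)
    have h2 := mem_edgesOf.mp (hπ₀ he')
    rw [h] at h1
    have hfst : e.1.1 = e'.1.1 := by
      apply π₀.symm.injective; apply Fin.ext; omega
    rcases e with ⟨⟨a, b⟩, hab⟩; rcases e' with ⟨⟨a', b'⟩, hab'⟩
    simp only at h hfst
    simp [Subtype.ext_iff, Prod.ext_iff, h, hfst]
  have hB : B.card = T.card := Finset.card_image_of_injOn hsnd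
  set H : Finset (Fin n) := Bᶜ with hHdef
  have hH : H.card = n - T.card := by
    rw [hHdef, Finset.card_compl, hB, Fintype.card_fin]
  have hcard : Fintype.card ({x // x ∈ H} ↪ Fin (n - T.card)) = (n - T.card).factorial := by
    rw [Fintype.card_embedding_eq, Fintype.card_fin, Fintype.card_coe, hH,
      Nat.descFactorial_self]
  set F : Equiv.Perm (Fin n) → ({x // x ∈ H} ↪ Fin (n - T.card)) := fun π =>
    ⟨fun x => ⟨rkOf H π x.1, hH ▸ rkOf_lt_card x.2⟩, by
      intro x y hxy
      exact Subtype.ext (rkOf_injOn x.2 y.2 (congrArg Fin.val hxy))⟩ with hFdef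
  have hinj : Set.InjOn F ↑(Finset.univ.filter
      (fun π : Equiv.Perm (Fin n) => T ⊆ edgesOf n π)) := by
    intro π hπ π' hπ' hF
    rw [Finset.mem_coe, Finset.mem_filter] at hπ hπ'
    replace hπ := hπ.2; replace hπ' := hπ'.2
    have hrk : ∀ x (hx : x ∈ H), rkOf H π x = rkOf H π' x := by
      intro x hx
      have h1 := congrFun (congrArg
        (fun g : {x // x ∈ H} ↪ Fin (n - T.card) => g.toFun) hF) ⟨x, hx⟩
      exact congrArg Fin.val h1
    have key : ∀ v, ∀ hv : v < n, π ⟨v, hv⟩ = π' ⟨v, hv⟩ := by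
      intro v
      induction v using Nat.strong_induction_on with
      | _ v IH =>
        intro hv
        have hv1 : v - 1 < n := lt_of_le_of_lt (Nat.sub_le v 1) hv
        rcases Classical.em (∃ e ∈ T, 0 < v ∧ e.1.1 = π ⟨v - 1, hv1⟩) with hcase | hcase
        · obtain ⟨e, heT, hvpos, hfst⟩ := hcase
          have step : ∀ ρ : Equiv.Perm (Fin n), T ⊆ edgesOf n ρ →
              e.1.1 = ρ ⟨v - 1, hv1⟩ → ρ ⟨v, hv⟩ = e.1.2 := by
            intro ρ hρ hf
            have h1 := mem_edgesOf.mp (hρ heT)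
            have ha : ρ.symm e.1.1 = ⟨v - 1, hv1⟩ := by
              rw [hf, Equiv.symm_apply_apply]
            have hb : ρ.symm e.1.2 = ⟨v, hv⟩ := by
              apply Fin.ext
              rw [h1, ha]
              show v - 1 + 1 = v
              omega
            rw [← hb, Equiv.apply_symm_apply]
          have hfst' : e.1.1 = π' ⟨v - 1, hv1⟩ := by
            rw [← IH (v - 1) (by omega) hv1]; exact hfst
          rw [step π hπ hfst, step π' hπ' hfst']
        · have hcase' : ¬∃ e ∈ T, 0 < v ∧ e.1.1 = π' ⟨v - 1, hv1⟩ := by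
            rintro ⟨e, heT, hvpos, hfst⟩
            exact hcase ⟨e, heT, hvpos, by
              rw [hfst, ← IH (v - 1) (by omega) hv1]⟩
          have hHmem : ∀ ρ : Equiv.Perm (Fin n), T ⊆ edgesOf n ρ →
              (¬∃ e ∈ T, 0 < v ∧ e.1.1 = ρ ⟨v - 1, hv1⟩) → ρ ⟨v, hv⟩ ∈ H := by
            intro ρ hρ hnc
            rw [hHdef, Finset.mem_compl]
            intro hmem
            obtain ⟨e, heT, hsnd2⟩ := Finset.mem_image.mp hmem
            have h1 := mem_edgesOf.mp (hρ heT)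
            rw [hsnd2, Equiv.symm_apply_apply] at h1
            have hvpos : 0 < v := by
              have : ((⟨v, hv⟩ : Fin n) : ℕ) = v := rfl
              omega
            apply hnc
            refine ⟨e, heT, hvpos, ?_⟩
            have hrs : ρ.symm e.1.1 = ⟨v - 1, hv1⟩ := by
              apply Fin.ext
              show (ρ.symm e.1.1).val = v - 1
              have : ((⟨v, hv⟩ : Fin n) : ℕ) = v := rfl
              omega
            rw [← hrs, Equiv.apply_symm_apply]
          have hx : π ⟨v, hv⟩ ∈ H := hHmem π hπ hcase
          have hx' : π' ⟨v, hv⟩ ∈ H := hHmem π' hπ' hcase'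
          have hfilt : H.filter (fun y => π.symm y < π.symm (π ⟨v, hv⟩))
              = H.filter (fun y => π'.symm y < π'.symm (π' ⟨v, hv⟩)) := by
            rw [Equiv.symm_apply_apply, Equiv.symm_apply_apply]
            apply Finset.filter_congr
            intro y _
            constructor
            · intro hlt
              have hw : (π.symm y).val < v := hlt
              have hwn : (π.symm y).val < n := (π.symm y).isLt
              have hy : π ⟨(π.symm y).val, hwn⟩ = y := by
                have h5 : (⟨(π.symm y).val, hwn⟩ : Fin n) = π.symm y := Fin.ext rfl
                rw [h5, Equiv.apply_symm_apply]
              have hy' : π' ⟨(π.symm y).val, hwn⟩ = y := by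
                rw [← IH _ hw]; exact hy
              have h6 : π'.symm y = ⟨(π.symm y).val, hwn⟩ :=
                π'.symm_apply_eq.mpr hy'.symm
              show π'.symm y < (⟨v, hv⟩ : Fin n)
              rw [h6]; exact hw
            · intro hlt
              have hw : (π'.symm y).val < v := hlt
              have hwn : (π'.symm y).val < n := (π'.symm y).isLt
              have hy' : π' ⟨(π'.symm y).val, hwn⟩ = y := by
                have h5 : (⟨(π'.symm y).val, hwn⟩ : Fin n) = π'.symm y := Fin.ext rfl
                rw [h5, Equiv.apply_symm_apply]
              have hy : π ⟨(π'.symm y).val, hwn⟩ = y := by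
                rw [IH _ hw]; exact hy'
              have h6 : π.symm y = ⟨(π'.symm y).val, hwn⟩ :=
                π.symm_apply_eq.mpr hy.symm
              show π.symm y < (⟨v, hv⟩ : Fin n)
              rw [h6]; exact hw
          have e1 : rkOf H π (π ⟨v, hv⟩) = rkOf H π' (π' ⟨v, hv⟩) := by
            rw [rkOf, rkOf, hfilt]
          have e2 : rkOf H π (π ⟨v, hv⟩) = rkOf H π' (π ⟨v, hv⟩) := hrk _ hx
          exact rkOf_injOn hx hx' (e2.symm.trans e1)
    apply Equiv.ext
    intro i
    have := key i.1 i.2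
    simpa using this
  calc (Finset.univ.filter (fun π : Equiv.Perm (Fin n) => T ⊆ edgesOf n π)).card
      ≤ (Finset.univ : Finset ({x // x ∈ H} ↪ Fin (n - T.card))).card :=
        Finset.card_le_card_of_injOn F (fun _ _ => Finset.mem_univ _) hinj
    _ = (n - T.card).factorial := by rw [Finset.card_univ, hcard]


lemma nat_bound (n k : ℕ) (hn : 1 ≤ n) :
    (n - 1).choose k * (n - k).factorial * k.factorial ≤ n.factorial := by
  rcases le_or_gt k (n - 1) with hk | hk
  · have h1 := Nat.choose_mul_factorial_mul_factorial hk
    have h2 : n - k = (n - 1 - k) + 1 := by omega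
    calc (n - 1).choose k * (n - k).factorial * k.factorial
        = (n - 1).choose k * k.factorial * (n - 1 - k).factorial * (n - k) := by
          rw [h2, Nat.factorial_succ]; ring
      _ = (n - 1).factorial * (n - k) := by rw [h1]
      _ ≤ (n - 1).factorial * n := Nat.mul_le_mul_left _ (by omega)
      _ = n.factorial := by rw [mul_comm, Nat.mul_factorial_pred (by omega)]
  · rw [Nat.choose_eq_zero_of_lt (by omega)]; simp

lemma sum_lam_le (n : ℕ) (hn : 1 ≤ n) (lam : ℝ) (hl : 1 ≤ lam) :
    ∑ π : Equiv.Perm (Fin n), ∑ σ : Equiv.Perm (Fin n),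
        lam ^ (edgesOf n π ∩ edgesOf n σ).card
      ≤ (n.factorial : ℝ) ^ 2 * Real.exp (lam - 1) := by
  classical
  set x : ℝ := lam - 1 with hxdef
  have hx0 : 0 ≤ x := by simp [hxdef]; linarith
  have hlx : lam = x + 1 := by ring
  -- pointwise binomial expansion
  have hA : ∀ π σ : Equiv.Perm (Fin n), lam ^ (edgesOf n π ∩ edgesOf n σ).card
      = ∑ T ∈ (edgesOf n π ∩ edgesOf n σ).powerset, x ^ T.card := by
    intro π σ
    have h1 := Finset.prod_add (fun _ : DEdge n => x) (fun _ => (1 : ℝ))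
      (edgesOf n π ∩ edgesOf n σ)
    simp only [Finset.prod_const, one_pow, mul_one] at h1
    rw [hlx, ← h1]
  -- rewrite as sum over all subsets with indicators
  have hB : ∀ π σ : Equiv.Perm (Fin n),
      ∑ T ∈ (edgesOf n π ∩ edgesOf n σ).powerset, x ^ T.card
      = ∑ T : Finset (DEdge n),
          (if T ⊆ edgesOf n π then x ^ T.card else 0) *
          (if T ⊆ edgesOf n σ then (1 : ℝ) else 0) := by
    intro π σ
    have h2 : (edgesOf n π ∩ edgesOf n σ).powerset
        = Finset.univ.filter (fun T => T ⊆ edgesOf n π ∩ edgesOf n σ) := by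
      ext T; simp only [Finset.mem_powerset, Finset.mem_filter, Finset.mem_univ, true_and]
    rw [h2, Finset.sum_filter]
    apply Finset.sum_congr rfl
    intro T _
    by_cases h3 : T ⊆ edgesOf n π <;> by_cases h4 : T ⊆ edgesOf n σ <;>
      simp [h3, h4, Finset.subset_inter_iff]
  -- the counting function
  set NT : Finset (DEdge n) → ℕ :=
    fun T => (Finset.univ.filter (fun π : Equiv.Perm (Fin n) => T ⊆ edgesOf n π)).card
    with hNTdef
  have main : ∑ π : Equiv.Perm (Fin n), ∑ σ : Equiv.Perm (Fin n),
      lam ^ (edgesOf n π ∩ edgesOf n σ).card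
      = ∑ T : Finset (DEdge n), (NT T : ℝ) * x ^ T.card * (NT T : ℝ) := by
    calc ∑ π : Equiv.Perm (Fin n), ∑ σ : Equiv.Perm (Fin n),
        lam ^ (edgesOf n π ∩ edgesOf n σ).card
        = ∑ π : Equiv.Perm (Fin n), ∑ σ : Equiv.Perm (Fin n), ∑ T : Finset (DEdge n),
            (if T ⊆ edgesOf n π then x ^ T.card else 0) *
            (if T ⊆ edgesOf n σ then (1 : ℝ) else 0) := by
          apply Finset.sum_congr rfl; intro π _
          apply Finset.sum_congr rfl; intro σ _
          rw [hA, hB]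
      _ = ∑ π : Equiv.Perm (Fin n), ∑ T : Finset (DEdge n),
            (if T ⊆ edgesOf n π then x ^ T.card else 0) *
            ∑ σ : Equiv.Perm (Fin n), (if T ⊆ edgesOf n σ then (1 : ℝ) else 0) := by
          apply Finset.sum_congr rfl; intro π _
          rw [Finset.sum_comm]
          apply Finset.sum_congr rfl; intro T _
          rw [Finset.mul_sum]
      _ = ∑ T : Finset (DEdge n),
            (∑ π : Equiv.Perm (Fin n), if T ⊆ edgesOf n π then x ^ T.card else 0) *
            ∑ σ : Equiv.Perm (Fin n), (if T ⊆ edgesOf n σ then (1 : ℝ) else 0) := by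
          rw [Finset.sum_comm]
          apply Finset.sum_congr rfl; intro T _
          rw [Finset.sum_mul]
      _ = ∑ T : Finset (DEdge n), (NT T : ℝ) * x ^ T.card * (NT T : ℝ) := by
          apply Finset.sum_congr rfl; intro T _
          rw [Finset.sum_boole, Finset.sum_ite, Finset.sum_const, Finset.sum_const_zero,
            add_zero, nsmul_eq_mul, hNTdef]
  rw [main]
  -- replace one factor NT by the factorial bound
  have step2 : ∑ T : Finset (DEdge n), (NT T : ℝ) * x ^ T.card * (NT T : ℝ)
      ≤ ∑ T : Finset (DEdge n), x ^ T.card * ((n - T.card).factorial : ℝ) * (NT T : ℝ) := by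
    apply Finset.sum_le_sum
    intro T _
    rcases Nat.eq_zero_or_pos (NT T) with h0 | hpos
    · rw [h0]; simp
    · have hne : (Finset.univ.filter
          (fun π : Equiv.Perm (Fin n) => T ⊆ edgesOf n π)).Nonempty :=
        Finset.card_pos.mp hpos
      obtain ⟨π₀, hπ₀⟩ := hne
      have hbound : NT T ≤ (n - T.card).factorial :=
        count_superperms T π₀ (Finset.mem_filter.mp hπ₀).2
      have h5 : (NT T : ℝ) ≤ ((n - T.card).factorial : ℝ) := by exact_mod_cast hbound
      have h6 : (0:ℝ) ≤ x ^ T.card := pow_nonneg hx0 _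
      have h7 : (0:ℝ) ≤ (NT T : ℝ) := Nat.cast_nonneg _
      calc (NT T : ℝ) * x ^ T.card * (NT T : ℝ)
          = x ^ T.card * (NT T : ℝ) * (NT T : ℝ) := by ring
        _ ≤ x ^ T.card * ((n - T.card).factorial : ℝ) * (NT T : ℝ) := by
            apply mul_le_mul_of_nonneg_right _ h7
            exact mul_le_mul_of_nonneg_left h5 h6
  refine step2.trans ?_
  -- unswap back to sum over π
  have step3 : ∑ T : Finset (DEdge n), x ^ T.card * ((n - T.card).factorial : ℝ) * (NT T : ℝ)
      = ∑ π : Equiv.Perm (Fin n), ∑ T ∈ (edgesOf n π).powerset,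
          x ^ T.card * ((n - T.card).factorial : ℝ) := by
    rw [Finset.sum_comm' (s := Finset.univ) (t' := Finset.univ)
      (s' := fun T => Finset.univ.filter (fun π : Equiv.Perm (Fin n) => T ⊆ edgesOf n π))
      (t := fun π => (edgesOf n π).powerset) ?_]
    · apply Finset.sum_congr rfl; intro T _
      rw [hNTdef]
      simp [Finset.sum_const, nsmul_eq_mul, mul_comm]
    · intro π T
      simp [Finset.mem_powerset]
  rw [step3]
  have step4 : ∀ π : Equiv.Perm (Fin n),
      ∑ T ∈ (edgesOf n π).powerset, x ^ T.card * ((n - T.card).factorial : ℝ)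
      ≤ (n.factorial : ℝ) * Real.exp x := by
    intro π
    rw [Finset.sum_powerset, card_edgesOf]
    have hsum : ∀ j, ∑ T ∈ Finset.powersetCard j (edgesOf n π),
        x ^ T.card * ((n - T.card).factorial : ℝ)
        = ((n - 1).choose j : ℝ) * (x ^ j * ((n - j).factorial : ℝ)) := by
      intro j
      have hcg : ∀ T ∈ Finset.powersetCard j (edgesOf n π),
          x ^ T.card * ((n - T.card).factorial : ℝ)
          = x ^ j * ((n - j).factorial : ℝ) := by
        intro T hT
        rw [(Finset.mem_powersetCard.mp hT).2]
      rw [Finset.sum_congr rfl hcg, Finset.sum_const, nsmul_eq_mul,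
        Finset.card_powersetCard, card_edgesOf]
    calc ∑ j ∈ Finset.range (n - 1 + 1), ∑ T ∈ Finset.powersetCard j (edgesOf n π),
          x ^ T.card * ((n - T.card).factorial : ℝ)
        = ∑ j ∈ Finset.range (n - 1 + 1),
            ((n - 1).choose j : ℝ) * (x ^ j * ((n - j).factorial : ℝ)) :=
          Finset.sum_congr rfl (fun j _ => hsum j)
      _ ≤ ∑ j ∈ Finset.range (n - 1 + 1),
            (n.factorial : ℝ) * (x ^ j / (j.factorial : ℝ)) := by
          apply Finset.sum_le_sum
          intro j _
          have hb := nat_bound n j hn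
          have hc : ((n - 1).choose j : ℝ) * ((n - j).factorial : ℝ)
              ≤ (n.factorial : ℝ) / (j.factorial : ℝ) := by
            rw [le_div_iff₀ (by positivity)]
            exact_mod_cast hb
          calc ((n - 1).choose j : ℝ) * (x ^ j * ((n - j).factorial : ℝ))
              = (((n - 1).choose j : ℝ) * ((n - j).factorial : ℝ)) * x ^ j := by ring
            _ ≤ ((n.factorial : ℝ) / (j.factorial : ℝ)) * x ^ j :=
                mul_le_mul_of_nonneg_right hc (pow_nonneg hx0 _)
            _ = (n.factorial : ℝ) * (x ^ j / (j.factorial : ℝ)) := by ring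
      _ = (n.factorial : ℝ) * ∑ j ∈ Finset.range (n - 1 + 1), x ^ j / (j.factorial : ℝ) := by
          rw [Finset.mul_sum]
      _ ≤ (n.factorial : ℝ) * Real.exp x :=
          mul_le_mul_of_nonneg_left (Real.sum_le_exp_of_nonneg hx0 _) (Nat.cast_nonneg _)
  calc ∑ π : Equiv.Perm (Fin n), ∑ T ∈ (edgesOf n π).powerset,
        x ^ T.card * ((n - T.card).factorial : ℝ)
      ≤ ∑ _π : Equiv.Perm (Fin n), (n.factorial : ℝ) * Real.exp x :=
        Finset.sum_le_sum (fun π _ => step4 π)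
    _ = (n.factorial : ℝ) ^ 2 * Real.exp x := by
        rw [Finset.sum_const, Finset.card_univ, Fintype.card_perm, Fintype.card_fin,
          nsmul_eq_mul]
        ring

lemma real_second_moment (n : ℕ) (hn : 1 ≤ n) (p : ℝ) (hp0 : 0 < p) (hp1 : p ≤ 1) :
    ∑ π : Equiv.Perm (Fin n), ∑ σ : Equiv.Perm (Fin n),
        p ^ (edgesOf n π ∪ edgesOf n σ).card
      ≤ ((n.factorial : ℝ) * p ^ (n - 1)) ^ 2 * Real.exp (1 / p - 1) := by
  classical
  have hterm : ∀ π σ : Equiv.Perm (Fin n),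
      p ^ (edgesOf n π ∪ edgesOf n σ).card
      = p ^ (2 * (n - 1)) * (1 / p) ^ (edgesOf n π ∩ edgesOf n σ).card := by
    intro π σ
    have hcc : (edgesOf n π ∪ edgesOf n σ).card + (edgesOf n π ∩ edgesOf n σ).card
        = 2 * (n - 1) := by
      rw [Finset.card_union_add_card_inter, card_edgesOf, card_edgesOf]; ring
    have hppow : p ^ (edgesOf n π ∪ edgesOf n σ).card
        * p ^ (edgesOf n π ∩ edgesOf n σ).card = p ^ (2 * (n - 1)) := by
      rw [← pow_add, hcc]
    have hpne : p ^ (edgesOf n π ∩ edgesOf n σ).card ≠ 0 := pow_ne_zero _ hp0.ne'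
    field_simp
    rw [mul_comm] at hppow
    rw [← hppow]
    rw [div_pow, one_pow, mul_comm (p ^ (edgesOf n π ∩ edgesOf n σ).card), mul_assoc,
      mul_one_div_cancel hpne, mul_one]
  calc ∑ π : Equiv.Perm (Fin n), ∑ σ : Equiv.Perm (Fin n),
        p ^ (edgesOf n π ∪ edgesOf n σ).card
      = p ^ (2 * (n - 1)) * ∑ π : Equiv.Perm (Fin n), ∑ σ : Equiv.Perm (Fin n),
          (1 / p) ^ (edgesOf n π ∩ edgesOf n σ).card := by
        rw [Finset.mul_sum]
        apply Finset.sum_congr rfl; intro π _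
        rw [Finset.mul_sum]
        apply Finset.sum_congr rfl; intro σ _
        exact hterm π σ
    _ ≤ p ^ (2 * (n - 1)) * ((n.factorial : ℝ) ^ 2 * Real.exp (1 / p - 1)) := by
        apply mul_le_mul_of_nonneg_left _ (by positivity)
        exact sum_lam_le n hn (1 / p) (by rw [le_div_iff₀ hp0]; linarith)
    _ = ((n.factorial : ℝ) * p ^ (n - 1)) ^ 2 * Real.exp (1 / p - 1) := by
        rw [two_mul, pow_add]
        ring


instance (n : ℕ) (q : ENNReal) (hq : q ≤ 1) :
    IsProbabilityMeasure (digraphMeasure n q hq) := by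
  unfold digraphMeasure; infer_instance

lemma meas_all {n : ℕ} (s : Set (DEdge n → Bool)) : MeasurableSet s :=
  s.toFinite.measurableSet

lemma cylinder_measure (n : ℕ) (q : ENNReal) (hq : q ≤ 1) (T : Finset (DEdge n)) :
    digraphMeasure n q hq {ω | ∀ e ∈ T, ω e = true} = q ^ T.card := by
  classical
  have hset : {ω : DEdge n → Bool | ∀ e ∈ T, ω e = true}
      = Set.univ.pi (fun e => if e ∈ T then ({true} : Set Bool) else Set.univ) := by
    ext ω
    simp only [Set.mem_setOf_eq, Set.mem_pi, Set.mem_univ, forall_true_left]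
    constructor
    · intro h e
      by_cases he : e ∈ T
      · simp [he, h e he]
      · simp [he]
    · intro h e he
      have h2 := h e
      simpa [he] using h2
  rw [digraphMeasure, hset, Measure.pi_pi]
  have hfac : ∀ e : DEdge n, (PMF.bernoulli q.toNNReal (by simpa using ENNReal.toNNReal_mono ENNReal.one_ne_top hq)).toMeasure
      (if e ∈ T then ({true} : Set Bool) else Set.univ)
      = if e ∈ T then q else 1 := by
    intro e
    by_cases he : e ∈ T
    · simp only [he, if_true]
      rw [PMF.toMeasure_apply_singleton _ _ (measurableSet_singleton _)]
      exact (PMF.bernoulli_apply _ true).trans (ENNReal.coe_toNNReal (ne_top_of_le_ne_top ENNReal.one_ne_top hq))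
    · simp only [he, if_false]
      rw [show ((PMF.bernoulli q.toNNReal (by simpa using ENNReal.toNNReal_mono ENNReal.one_ne_top hq)).toMeasure Set.univ) = 1 from measure_univ]
  rw [Finset.prod_congr rfl (fun e _ => hfac e), Finset.prod_ite_mem,
    Finset.univ_inter, Finset.prod_const]



noncomputable def pathEvent (n : ℕ) (π : Equiv.Perm (Fin n)) : Set (DEdge n → Bool) :=
  {ω | ∀ e ∈ edgesOf n π, ω e = true}

lemma measure_pathEvent (n : ℕ) (q : ENNReal) (hq : q ≤ 1) (π : Equiv.Perm (Fin n)) :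
    digraphMeasure n q hq (pathEvent n π) = q ^ (n - 1) := by
  rw [pathEvent, cylinder_measure, card_edgesOf]

lemma pathEvent_inter (n : ℕ) (π σ : Equiv.Perm (Fin n)) :
    pathEvent n π ∩ pathEvent n σ
      = {ω | ∀ e ∈ edgesOf n π ∪ edgesOf n σ, ω e = true} := by
  ext ω
  simp only [pathEvent, Set.mem_inter_iff, Set.mem_setOf_eq, Finset.mem_union]
  constructor
  · rintro ⟨h1, h2⟩ e he
    rcases he with he | he
    exacts [h1 e he, h2 e he]
  · intro h
    exact ⟨fun e he => h e (Or.inl he), fun e he => h e (Or.inr he)⟩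

lemma hamY_cast (n : ℕ) (ω : DEdge n → Bool) :
    (hamY n ω : ENNReal) = ∑ π : Equiv.Perm (Fin n),
      (pathEvent n π).indicator 1 ω := by
  classical
  rw [hamY, Finset.card_filter, Nat.cast_sum]
  apply Finset.sum_congr rfl
  intro π _
  have hiff : (∀ i : Fin (n - 1), ω (pathEdge n π i) = true) ↔ ω ∈ pathEvent n π := by
    simp only [pathEvent, Set.mem_setOf_eq, edgesOf]
    constructor
    · intro h e he
      obtain ⟨i, _, rfl⟩ := Finset.mem_image.mp he
      exact h i
    · intro h i
      exact h _ (Finset.mem_image_of_mem _ (Finset.mem_univ i))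
  by_cases h : ω ∈ pathEvent n π
  · simp [hiff.mpr h, Set.indicator_of_mem h]
  · have hc : ¬ (∀ i : Fin (n - 1), ω (pathEdge n π i) = true) := fun hc => h (hiff.mp hc)
    rw [if_neg hc, Set.indicator_of_notMem h]
    simp

lemma lintegral_hamY (n : ℕ) (q : ENNReal) (hq : q ≤ 1) :
    ∫⁻ ω, (hamY n ω : ENNReal) ∂(digraphMeasure n q hq)
      = (n.factorial : ENNReal) * q ^ (n - 1) := by
  classical
  calc ∫⁻ ω, (hamY n ω : ENNReal) ∂(digraphMeasure n q hq)
      = ∫⁻ ω, ∑ π : Equiv.Perm (Fin n), (pathEvent n π).indicator 1 ω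
          ∂(digraphMeasure n q hq) := lintegral_congr (hamY_cast n)
    _ = ∑ π : Equiv.Perm (Fin n), ∫⁻ ω, (pathEvent n π).indicator 1 ω
          ∂(digraphMeasure n q hq) :=
        lintegral_finset_sum _ (fun π _ => measurable_of_finite _)
    _ = ∑ _π : Equiv.Perm (Fin n), q ^ (n - 1) := by
        apply Finset.sum_congr rfl
        intro π _
        rw [lintegral_indicator_one (meas_all _), measure_pathEvent]
    _ = (n.factorial : ENNReal) * q ^ (n - 1) := by
        rw [Finset.sum_const, Finset.card_univ, Fintype.card_perm, Fintype.card_fin,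
          nsmul_eq_mul]

lemma lintegral_hamY_sq (n : ℕ) (q : ENNReal) (hq : q ≤ 1) :
    ∫⁻ ω, ((hamY n ω : ENNReal)) ^ 2 ∂(digraphMeasure n q hq)
      = ∑ π : Equiv.Perm (Fin n), ∑ σ : Equiv.Perm (Fin n),
          q ^ (edgesOf n π ∪ edgesOf n σ).card := by
  classical
  have hpt : ∀ ω, ((hamY n ω : ENNReal)) ^ 2
      = ∑ π : Equiv.Perm (Fin n), ∑ σ : Equiv.Perm (Fin n),
          (pathEvent n π ∩ pathEvent n σ).indicator 1 ω := by
    intro ω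
    rw [hamY_cast, sq, Finset.sum_mul_sum]
    apply Finset.sum_congr rfl; intro π _
    apply Finset.sum_congr rfl; intro σ _
    have h := Set.inter_indicator_mul (s := pathEvent n π) (t := pathEvent n σ)
      (fun _ => (1 : ENNReal)) (fun _ => (1 : ENNReal)) ω
    simp only [mul_one] at h
    exact h.symm
  calc ∫⁻ ω, ((hamY n ω : ENNReal)) ^ 2 ∂(digraphMeasure n q hq)
      = ∫⁻ ω, ∑ π : Equiv.Perm (Fin n), ∑ σ : Equiv.Perm (Fin n),
          (pathEvent n π ∩ pathEvent n σ).indicator 1 ω ∂(digraphMeasure n q hq) :=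
        lintegral_congr hpt
    _ = ∑ π : Equiv.Perm (Fin n), ∑ σ : Equiv.Perm (Fin n),
          ∫⁻ ω, (pathEvent n π ∩ pathEvent n σ).indicator 1 ω ∂(digraphMeasure n q hq) := by
        rw [lintegral_finset_sum _ (fun π _ => measurable_of_finite _)]
        exact Finset.sum_congr rfl (fun π _ =>
          lintegral_finset_sum _ (fun σ _ => measurable_of_finite _))
    _ = ∑ π : Equiv.Perm (Fin n), ∑ σ : Equiv.Perm (Fin n),
          q ^ (edgesOf n π ∪ edgesOf n σ).card := by
        apply Finset.sum_congr rfl; intro π _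
        apply Finset.sum_congr rfl; intro σ _
        rw [lintegral_indicator_one (meas_all _), pathEvent_inter, cylinder_measure]

/-- second-moment lower bound. Fix `n ≥ 2` and `p ∈ (0,1)`. If `Y` is the
number of Hamiltonian paths of `G⃗(n,p)`, then
`ℙ(Y ≥ ½ n! p^{n−1}) ≥ ¼ exp(1 − 1/p)`. -/
theorem stmt16 (n : ℕ) (hn : 2 ≤ n) (p : ℝ) (hp0 : 0 < p) (hp1 : p < 1) :
    ENNReal.ofReal ((1 / 4) * Real.exp (1 - 1 / p)) ≤
      digraphMeasure n (ENNReal.ofReal p) (ENNReal.ofReal_le_one.mpr hp1.le)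
        {ω | (1 / 2 : ℝ) * (n.factorial : ℝ) * p ^ (n - 1) ≤ (hamY n ω : ℝ)} := by
  classical
  set q : ENNReal := ENNReal.ofReal p with hqdef
  set μ : Measure (DEdge n → Bool) :=
    digraphMeasure n q (ENNReal.ofReal_le_one.mpr hp1.le) with hμdef
  set t : Set (DEdge n → Bool) :=
    {ω | (1 / 2 : ℝ) * (n.factorial : ℝ) * p ^ (n - 1) ≤ (hamY n ω : ℝ)} with htdef
  show ENNReal.ofReal ((1 / 4) * Real.exp (1 - 1 / p)) ≤ μ t
  set c : ℝ := (n.factorial : ℝ) * p ^ (n - 1) with hcdef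
  have hc0 : 0 < c := by positivity
  set K : ℝ := Real.exp (1 / p - 1) with hKdef
  have hK0 : 0 < K := Real.exp_pos _
  set f : (DEdge n → Bool) → ENNReal := fun ω => (hamY n ω : ENNReal) with hfdef
  have hEY : ∫⁻ ω, f ω ∂μ = ENNReal.ofReal c := by
    rw [hfdef, hμdef, lintegral_hamY, hcdef,
      ENNReal.ofReal_mul (by positivity), ENNReal.ofReal_natCast,
      ENNReal.ofReal_pow hp0.le]
  have hEY2le : ∫⁻ ω, f ω ^ 2 ∂μ ≤ ENNReal.ofReal (c ^ 2 * K) := by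
    rw [hfdef, hμdef, lintegral_hamY_sq]
    have hsum : ∑ π : Equiv.Perm (Fin n), ∑ σ : Equiv.Perm (Fin n),
        q ^ (edgesOf n π ∪ edgesOf n σ).card
        = ENNReal.ofReal (∑ π : Equiv.Perm (Fin n), ∑ σ : Equiv.Perm (Fin n),
            p ^ (edgesOf n π ∪ edgesOf n σ).card) := by
      rw [ENNReal.ofReal_sum_of_nonneg
        (fun _ _ => Finset.sum_nonneg (fun _ _ => by positivity))]
      apply Finset.sum_congr rfl; intro π _
      rw [ENNReal.ofReal_sum_of_nonneg (fun _ _ => by positivity)]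
      apply Finset.sum_congr rfl; intro σ _
      rw [ENNReal.ofReal_pow hp0.le]
    rw [hsum]
    apply ENNReal.ofReal_le_ofReal
    have h2 := real_second_moment n (by omega) p hp0 hp1.le
    calc ∑ π : Equiv.Perm (Fin n), ∑ σ : Equiv.Perm (Fin n),
        p ^ (edgesOf n π ∪ edgesOf n σ).card
        ≤ ((n.factorial : ℝ) * p ^ (n - 1)) ^ 2 * Real.exp (1 / p - 1) := h2
      _ = c ^ 2 * K := by rw [hcdef, hKdef]
  have hsplit : ENNReal.ofReal c
      ≤ ENNReal.ofReal (c / 2) + ∫⁻ ω, f ω * t.indicator 1 ω ∂μ := by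
    rw [← hEY]
    have hpt : ∀ ω, f ω ≤ ENNReal.ofReal (c / 2) + f ω * t.indicator 1 ω := by
      intro ω
      by_cases hω : ω ∈ t
      · rw [Set.indicator_of_mem hω, Pi.one_apply, mul_one]
        exact le_add_self
      · rw [Set.indicator_of_notMem hω, mul_zero, add_zero]
        have hlt : (hamY n ω : ℝ) ≤ c / 2 := by
          rw [htdef] at hω
          simp only [Set.mem_setOf_eq] at hω
          have := not_le.mp hω
          rw [hcdef]
          nlinarith [this]
        calc f ω = ENNReal.ofReal ((hamY n ω : ℝ)) := by
              rw [hfdef, ENNReal.ofReal_natCast]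
          _ ≤ ENNReal.ofReal (c / 2) := ENNReal.ofReal_le_ofReal hlt
    calc ∫⁻ ω, f ω ∂μ
        ≤ ∫⁻ ω, (ENNReal.ofReal (c / 2) + f ω * t.indicator 1 ω) ∂μ :=
          lintegral_mono hpt
      _ = ENNReal.ofReal (c / 2) * μ Set.univ + ∫⁻ ω, f ω * t.indicator 1 ω ∂μ := by
          rw [lintegral_add_left measurable_const, lintegral_const]
      _ = ENNReal.ofReal (c / 2) + ∫⁻ ω, f ω * t.indicator 1 ω ∂μ := by
          rw [measure_univ, mul_one]
  have hI : ENNReal.ofReal (c / 2) ≤ ∫⁻ ω, f ω * t.indicator 1 ω ∂μ := by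
    have hco : ENNReal.ofReal c = ENNReal.ofReal (c / 2) + ENNReal.ofReal (c / 2) := by
      rw [← ENNReal.ofReal_add (by positivity) (by positivity)]
      ring_nf
    rw [hco] at hsplit
    exact (ENNReal.add_le_add_iff_left ENNReal.ofReal_ne_top).mp hsplit
  have hCS : ∫⁻ ω, f ω * t.indicator 1 ω ∂μ
      ≤ (∫⁻ ω, f ω ^ 2 ∂μ) ^ ((1:ℝ) / 2) * (μ t) ^ ((1:ℝ) / 2) := by
    have hconj : (2 : ℝ).HolderConjugate 2 := by constructor <;> norm_num
    have h := ENNReal.lintegral_mul_le_Lp_mul_Lq μ hconj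
      (f := f) (g := fun ω => t.indicator 1 ω)
      (measurable_of_finite f).aemeasurable (measurable_of_finite _).aemeasurable
    have e2 : ∫⁻ ω, f ω ^ (2:ℝ) ∂μ = ∫⁻ ω, f ω ^ 2 ∂μ := by
      apply lintegral_congr
      intro ω
      rw [show ((2:ℝ)) = ((2:ℕ):ℝ) by norm_num, ENNReal.rpow_natCast]
    have e3 : ∫⁻ ω, (t.indicator (1 : (DEdge n → Bool) → ENNReal) ω) ^ (2:ℝ) ∂μ = μ t := by
      have hptw : ∀ ω, (t.indicator (1 : (DEdge n → Bool) → ENNReal) ω) ^ (2:ℝ)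
          = t.indicator 1 ω := by
        intro ω
        by_cases hω : ω ∈ t
        · rw [Set.indicator_of_mem hω, Pi.one_apply, ENNReal.one_rpow]
        · rw [Set.indicator_of_notMem hω, ENNReal.zero_rpow_of_pos (by norm_num)]
      rw [lintegral_congr hptw, lintegral_indicator_one (meas_all _)]
    rw [e2, e3] at h
    exact h
  have sqhalf : ∀ x : ENNReal, (x ^ ((1:ℝ) / 2)) ^ (2:ℕ) = x := by
    intro x
    rw [← ENNReal.rpow_natCast (x ^ ((1:ℝ)/2)) 2, ← ENNReal.rpow_mul]
    norm_num
  have hsq : ENNReal.ofReal ((c / 2) ^ 2) ≤ ENNReal.ofReal (c ^ 2 * K) * μ t := by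
    have h1 : ENNReal.ofReal (c / 2) ≤ (∫⁻ ω, f ω ^ 2 ∂μ) ^ ((1:ℝ) / 2) * (μ t) ^ ((1:ℝ) / 2) :=
      hI.trans hCS
    have h2 := mul_le_mul' h1 h1
    calc ENNReal.ofReal ((c / 2) ^ 2)
        = ENNReal.ofReal (c / 2) * ENNReal.ofReal (c / 2) := by
          rw [← ENNReal.ofReal_mul (by positivity)]; ring_nf
      _ ≤ ((∫⁻ ω, f ω ^ 2 ∂μ) ^ ((1:ℝ) / 2) * (μ t) ^ ((1:ℝ) / 2)) *
          ((∫⁻ ω, f ω ^ 2 ∂μ) ^ ((1:ℝ) / 2) * (μ t) ^ ((1:ℝ) / 2)) := h2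
      _ = ((∫⁻ ω, f ω ^ 2 ∂μ) ^ ((1:ℝ) / 2)) ^ (2:ℕ) * ((μ t) ^ ((1:ℝ) / 2)) ^ (2:ℕ) := by
          rw [sq, sq]; ring
      _ = (∫⁻ ω, f ω ^ 2 ∂μ) * μ t := by rw [sqhalf, sqhalf]
      _ ≤ ENNReal.ofReal (c ^ 2 * K) * μ t := mul_le_mul_left hEY2le _
  have hdiv : ENNReal.ofReal ((c / 2) ^ 2) / ENNReal.ofReal (c ^ 2 * K) ≤ μ t :=
    ENNReal.div_le_of_le_mul (by rw [mul_comm] at hsq; exact hsq)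
  have hfinal : (1 / 4 : ℝ) * Real.exp (1 - 1 / p) = (c / 2) ^ 2 / (c ^ 2 * K) := by
    rw [hKdef, show (1:ℝ) - 1 / p = -(1 / p - 1) by ring, Real.exp_neg]
    field_simp
    ring
  rw [hfinal, ENNReal.ofReal_div_of_pos (by positivity)]
  exact hdiv
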